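/- Let p1p3 and p2p4 be two crossing segments and ℓ a line that strictly separates the segments p1p4 and p2p3 (no endpoint of these segments lies on ℓ). Then ℓ crosses both p1p3 and p2p4 but crosses neither p1p4 nor p2p3; hence the contribution of these four segments to Φ_ℓ drops by exactly 2 under the flip. -/

import Mathlib

open scoped Classical

noncomputable section

/-- The plane. -/
abbrev Pl := ℝ × ℝ
/-- A segment, as an ordered pair of endpoints. -/
abbrev Seg := Pl × Pl

/-- The set of points of a segment. -/
def segSet (s : Seg) : Set Pl := segment ℝ s.1 s.2

/-- Two segments cross: they intersect in exactly one point which is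
not an endpoint of either. -/
def Cross (s t : Seg) : Prop :=
  ∃ x : Pl, segSet s ∩ segSet t = {x} ∧ x ≠ s.1 ∧ x ≠ s.2 ∧ x ≠ t.1 ∧ x ≠ t.2

/-- The line through two points. -/
def lineThrough (p q : Pl) : Set Pl := {x | Collinear ℝ ({p, q, x} : Set Pl)}

/-- A line crosses a segment: they intersect in exactly one point which is
not an endpoint of the segment. -/
def LineCross (l : Set Pl) (s : Seg) : Prop :=
  ∃ x : Pl, l ∩ segSet s = {x} ∧ x ≠ s.1 ∧ x ≠ s.2

/-- Signed side of the line through `a` and `b` on which `x` lies. -/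
def sideVal (a b x : Pl) : ℝ :=
  (b.1 - a.1) * (x.2 - a.2) - (b.2 - a.2) * (x.1 - a.1)

/-- General position: no three (distinct) points of `S` are collinear. -/
def GenPos (S : Set Pl) : Prop :=
  ∀ a ∈ S, ∀ b ∈ S, ∀ c ∈ S, a ≠ b → a ≠ c → b ≠ c → ¬ Collinear ℝ ({a, b, c} : Set Pl)

/-- Strictly convex position. -/
def ConvexPos (S : Set Pl) : Prop := ∀ p ∈ S, p ∉ convexHull ℝ (S \ {p})

/-- A set of segments is a matching: no degenerate segment and all endpoints distinct. -/
def IsMatching (M : Finset Seg) : Prop :=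
  (∀ s ∈ M, s.1 ≠ s.2) ∧
  ∀ s ∈ M, ∀ t ∈ M, s ≠ t → ({s.1, s.2} : Set Pl) ∩ {t.1, t.2} = ∅

/-- A perfect matching on the point set `P`. -/
def IsPM (P : Finset Pl) (M : Finset Seg) : Prop :=
  IsMatching M ∧ (∀ s ∈ M, s.1 ∈ P ∧ s.2 ∈ P) ∧
  ∀ p ∈ P, ∃ s ∈ M, p = s.1 ∨ p = s.2

/-- Number of (unordered) crossing pairs of segments of `M`. -/
def phiX (M : Finset Seg) : ℕ :=
  Set.ncard {z : Sym2 Seg | ∃ u t : Seg, z = s(u, t) ∧ u ∈ M ∧ t ∈ M ∧ Cross u t}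

/-- Number of segments of `M` crossed by the line `l`. -/
def phiLine (l : Set Pl) (M : Finset Seg) : ℕ :=
  Set.ncard {s : Seg | s ∈ M ∧ LineCross l s}

/-- All lines through two points of `P`. -/
def linesOf (P : Finset Pl) : Set (Set Pl) :=
  {l | ∃ p ∈ P, ∃ q ∈ P, p ≠ q ∧ l = lineThrough p q}

/-- The line potential with respect to a set of lines `L`. -/
def phiL (L : Set (Set Pl)) (M : Finset Seg) : ℕ := ∑ᶠ l ∈ L, phiLine l M

/-- A flip in the matching version: replace a crossing pair by one of the two
non-crossing pairs on the same four endpoints. -/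
def IsFlip (M M' : Finset Seg) : Prop :=
  ∃ p1 p2 p3 p4 : Pl,
    Cross (p1, p3) (p2, p4) ∧ (p1, p3) ∈ M ∧ (p2, p4) ∈ M ∧
    ((¬ Cross (p1, p4) (p2, p3) ∧ M' = (M \ {(p1, p3), (p2, p4)}) ∪ {(p1, p4), (p2, p3)}) ∨
     (¬ Cross (p1, p2) (p3, p4) ∧ M' = (M \ {(p1, p3), (p2, p4)}) ∪ {(p1, p2), (p3, p4)}))

/-- `t1, t2` reconnect the four endpoints of `s1, s2` forming a 4-cycle. -/
def Rewires (s1 s2 t1 t2 : Seg) : Prop :=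
  ∃ a b c d : Pl, ({s1.1, s1.2} : Set Pl) = {a, b} ∧ ({s2.1, s2.2} : Set Pl) = {c, d} ∧
    ((({t1.1, t1.2} : Set Pl) = {a, c} ∧ ({t2.1, t2.2} : Set Pl) = {b, d}) ∨
     (({t1.1, t1.2} : Set Pl) = {a, d} ∧ ({t2.1, t2.2} : Set Pl) = {b, c}))

/-- A flip in the multigraph (multiset) version. -/
def IsFlipMS (M M' : Multiset Seg) : Prop :=
  ∃ p1 p2 p3 p4 : Pl, Cross (p1, p3) (p2, p4) ∧ (p1, p3) ∈ M ∧ (p2, p4) ∈ M ∧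
    ∃ t1 t2 : Seg, Rewires (p1, p3) (p2, p4) t1 t2 ∧ ¬ Cross t1 t2 ∧
      M' = t1 ::ₘ t2 ::ₘ ((M.erase (p1, p3)).erase (p2, p4))

/-- A red-blue perfect matching: first coordinates red, second coordinates blue. -/
def IsRBPM (R B : Finset Pl) (M : Finset Seg) : Prop :=
  IsMatching M ∧ (∀ s ∈ M, s.1 ∈ R ∧ s.2 ∈ B) ∧
  (∀ p ∈ R, ∃ s ∈ M, p = s.1) ∧ (∀ p ∈ B, ∃ s ∈ M, p = s.2)

/-- A flip in the red-blue matching version (the replacement pair is forced). -/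
def IsRBFlip (M M' : Finset Seg) : Prop :=
  ∃ r1 b1 r2 b2 : Pl, Cross (r1, b1) (r2, b2) ∧ (r1, b1) ∈ M ∧ (r2, b2) ∈ M ∧
    ¬ Cross (r1, b2) (r2, b1) ∧ M' = (M \ {(r1, b1), (r2, b2)}) ∪ {(r1, b2), (r2, b1)}

/-- `T` is (the edge set of) a tour on `N` points. -/
def IsTour (T : Finset Seg) (N : ℕ) : Prop :=
  3 ≤ N ∧ ∃ v : Fin N → Pl, Function.Injective v ∧
    T = Finset.image (fun i : Fin N => (v i, v (finRotate N i))) Finset.univ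

/-- A flip in the TSP version: remove two crossing tour edges and reconnect the
four endpoints. -/
def IsTSPFlip (T T' : Finset Seg) : Prop :=
  ∃ s1 s2 t1 t2 : Seg, Cross s1 s2 ∧ s1 ∈ T ∧ s2 ∈ T ∧ Rewires s1 s2 t1 t2 ∧
    T' = (T \ {s1, s2}) ∪ {t1, t2}

/-- `a` and `b` are consecutive points on the convex-hull boundary of `Q`. -/
def HullEdge (Q : Finset Pl) (a b : Pl) : Prop :=
  a ∈ Q ∧ b ∈ Q ∧ a ≠ b ∧
  ((∀ c ∈ Q, c ≠ a → c ≠ b → 0 < sideVal a b c) ∨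
   (∀ c ∈ Q, c ≠ a → c ≠ b → sideVal a b c < 0))

/-- The line-potential drop of a flip, independent of the ambient matching. -/
def flipDrop (P : Finset Pl) (p1 p2 p3 p4 : Pl) : ℤ :=
  ∑ᶠ l ∈ linesOf P,
    ((phiLine l {(p1, p3), (p2, p4)} : ℤ) - (phiLine l {(p1, p4), (p2, p3)} : ℤ))

lemma sideVal_affine (a b p q : Pl) (t : ℝ) :
    sideVal a b ((1 - t) • p + t • q) = (1 - t) * sideVal a b p + t * sideVal a b q := by
  simp only [sideVal, Prod.smul_fst, Prod.smul_snd, Prod.fst_add, Prod.snd_add, smul_eq_mul]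
  ring

lemma mem_lineThrough_iff (a b x : Pl) (hab : a ≠ b) :
    x ∈ lineThrough a b ↔ sideVal a b x = 0 := by
  constructor
  · intro h
    have ha : a ∈ ({a, b, x} : Set Pl) := by simp
    rw [lineThrough, Set.mem_setOf_eq, collinear_iff_of_mem ha] at h
    obtain ⟨v, hv⟩ := h
    obtain ⟨r, hr⟩ := hv b (by simp)
    obtain ⟨s, hs⟩ := hv x (by simp)
    have hr1 : b.1 = r * v.1 + a.1 := by rw [hr]; simp [smul_eq_mul]
    have hr2 : b.2 = r * v.2 + a.2 := by rw [hr]; simp [smul_eq_mul]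
    have hs1 : x.1 = s * v.1 + a.1 := by rw [hs]; simp [smul_eq_mul]
    have hs2 : x.2 = s * v.2 + a.2 := by rw [hs]; simp [smul_eq_mul]
    simp only [sideVal, hr1, hr2, hs1, hs2]
    ring
  · intro h
    have hne : b.1 - a.1 ≠ 0 ∨ b.2 - a.2 ≠ 0 := by
      by_contra hc
      push_neg at hc
      exact hab (Prod.ext (by linarith [hc.1]) (by linarith [hc.2])).symm
    have ha : a ∈ ({a, b, x} : Set Pl) := by simp
    rw [lineThrough, Set.mem_setOf_eq, collinear_iff_of_mem ha]
    refine ⟨b - a, fun p hp => ?_⟩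
    simp only [Set.mem_insert_iff, Set.mem_singleton_iff] at hp
    rcases hp with rfl | rfl | rfl
    · exact ⟨0, by simp⟩
    · refine ⟨1, ?_⟩
      simp [vadd_eq_add]
    · simp only [sideVal] at h
      rcases hne with h1 | h2
      · refine ⟨(p.1 - a.1) / (b.1 - a.1), ?_⟩
        have e2 : p.2 - a.2 = (p.1 - a.1) / (b.1 - a.1) * (b.2 - a.2) := by
          field_simp
          nlinarith [h]
        refine Prod.ext ?_ ?_
        · simp only [vadd_eq_add, Prod.fst_add, Prod.smul_fst, Prod.fst_sub, smul_eq_mul]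
          field_simp
          ring
        · simp only [vadd_eq_add, Prod.snd_add, Prod.smul_snd, Prod.snd_sub, smul_eq_mul]
          linarith [e2]
      · refine ⟨(p.2 - a.2) / (b.2 - a.2), ?_⟩
        have e1 : p.1 - a.1 = (p.2 - a.2) / (b.2 - a.2) * (b.1 - a.1) := by
          field_simp
          nlinarith [h]
        refine Prod.ext ?_ ?_
        · simp only [vadd_eq_add, Prod.fst_add, Prod.smul_fst, Prod.fst_sub, smul_eq_mul]
          linarith [e1]
        · simp only [vadd_eq_add, Prod.snd_add, Prod.smul_snd, Prod.snd_sub, smul_eq_mul]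
          field_simp
          ring

lemma lineCross_of_signs (a b p q : Pl) (hab : a ≠ b)
    (hp : 0 < sideVal a b p) (hq : sideVal a b q < 0) :
    LineCross (lineThrough a b) (p, q) := by
  set fp := sideVal a b p with hfp
  set fq := sideVal a b q with hfq
  have hden : 0 < fp - fq := by linarith
  set t0 : ℝ := fp / (fp - fq) with ht0
  have ht0pos : 0 < t0 := div_pos hp hden
  have ht0lt : t0 < 1 := by
    rw [ht0, div_lt_one hden]; linarith
  set x : Pl := (1 - t0) • p + t0 • q with hx
  have hfx : sideVal a b x = 0 := by
    rw [hx, sideVal_affine, ← hfp, ← hfq, ht0]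
    have h' : fp - fq ≠ 0 := ne_of_gt hden
    field_simp
    ring
  have hxseg : x ∈ segSet (p, q) := by
    rw [segSet, segment_eq_image]
    exact ⟨t0, ⟨le_of_lt ht0pos, le_of_lt ht0lt⟩, rfl⟩
  refine ⟨x, ?_, ?_, ?_⟩
  · ext y
    simp only [Set.mem_inter_iff, Set.mem_singleton_iff]
    constructor
    · rintro ⟨hyl, hys⟩
      rw [segSet, segment_eq_image] at hys
      obtain ⟨s, hs, rfl⟩ := hys
      have hfy := sideVal_affine a b p q s
      rw [(mem_lineThrough_iff a b _ hab).mp hyl] at hfy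
      have hst : s = t0 := by
        rw [ht0]
        field_simp
        nlinarith [hfy]
      rw [hst, hx]
    · rintro rfl
      exact ⟨(mem_lineThrough_iff a b x hab).mpr hfx, hxseg⟩
  · intro h
    rw [h] at hfx
    simp only at hfx
    exact absurd hfx (ne_of_gt hp)
  · intro h
    rw [h] at hfx
    simp only at hfx
    exact absurd hfx (ne_of_lt hq)

lemma not_lineCross_of_ne (a b : Pl) (hab : a ≠ b) (s : Seg)
    (h : ∀ x ∈ segSet s, sideVal a b x ≠ 0) :
    ¬ LineCross (lineThrough a b) s := by
  rintro ⟨x, hx, -, -⟩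
  have : x ∈ lineThrough a b ∩ segSet s := by rw [hx]; rfl
  exact h x this.2 ((mem_lineThrough_iff a b x hab).mp this.1)

lemma lineCross_swap (l : Set Pl) (p q : Pl) :
    LineCross l (p, q) ↔ LineCross l (q, p) := by
  unfold LineCross segSet
  simp only [segment_symm ℝ q p]
  constructor <;> rintro ⟨x, h1, h2, h3⟩ <;> exact ⟨x, h1, h3, h2⟩

/-- if a line strictly separates the new segments `p1p4` and `p2p3`, then it
crosses both old segments `p1p3`, `p2p4` and neither new segment; hence the contribution
of these four segments to `Φ_ℓ` drops by exactly 2 under the flip. -/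
theorem stmt3 (p1 p2 p3 p4 a b : Pl) (hab : a ≠ b)
    (hgp : GenPos ({p1, p2, p3, p4} : Set Pl))
    (hcross : Cross (p1, p3) (p2, p4))
    (hsep : ((∀ x ∈ segSet (p1, p4), 0 < sideVal a b x) ∧
              (∀ y ∈ segSet (p2, p3), sideVal a b y < 0)) ∨
            ((∀ x ∈ segSet (p1, p4), sideVal a b x < 0) ∧
              (∀ y ∈ segSet (p2, p3), 0 < sideVal a b y))) :
    LineCross (lineThrough a b) (p1, p3) ∧ LineCross (lineThrough a b) (p2, p4) ∧
    ¬ LineCross (lineThrough a b) (p1, p4) ∧ ¬ LineCross (lineThrough a b) (p2, p3) ∧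
    (if LineCross (lineThrough a b) (p1, p3) then 1 else 0) +
        (if LineCross (lineThrough a b) (p2, p4) then 1 else 0) =
      ((if LineCross (lineThrough a b) (p1, p4) then 1 else 0) +
        (if LineCross (lineThrough a b) (p2, p3) then (1 : ℕ) else 0)) + 2 := by
  have hp1m : p1 ∈ segSet (p1, p4) := left_mem_segment ℝ p1 p4
  have hp4m : p4 ∈ segSet (p1, p4) := right_mem_segment ℝ p1 p4
  have hp2m : p2 ∈ segSet (p2, p3) := left_mem_segment ℝ p2 p3
  have hp3m : p3 ∈ segSet (p2, p3) := right_mem_segment ℝ p2 p3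
  have key : LineCross (lineThrough a b) (p1, p3) ∧ LineCross (lineThrough a b) (p2, p4) ∧
      ¬ LineCross (lineThrough a b) (p1, p4) ∧ ¬ LineCross (lineThrough a b) (p2, p3) := by
    rcases hsep with ⟨h14, h23⟩ | ⟨h14, h23⟩
    · refine ⟨lineCross_of_signs a b p1 p3 hab (h14 p1 hp1m) (h23 p3 hp3m),
        (lineCross_swap _ _ _).mpr
          (lineCross_of_signs a b p4 p2 hab (h14 p4 hp4m) (h23 p2 hp2m)),
        not_lineCross_of_ne a b hab _ (fun x hx => ne_of_gt (h14 x hx)),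
        not_lineCross_of_ne a b hab _ (fun x hx => ne_of_lt (h23 x hx))⟩
    · refine ⟨(lineCross_swap _ _ _).mpr
          (lineCross_of_signs a b p3 p1 hab (h23 p3 hp3m) (h14 p1 hp1m)),
        lineCross_of_signs a b p2 p4 hab (h23 p2 hp2m) (h14 p4 hp4m),
        not_lineCross_of_ne a b hab _ (fun x hx => ne_of_lt (h14 x hx)),
        not_lineCross_of_ne a b hab _ (fun x hx => ne_of_gt (h23 x hx))⟩
  obtain ⟨h1, h2, h3, h4⟩ := key
  refine ⟨h1, h2, h3, h4, ?_⟩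
  simp [h1, h2, h3, h4]
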